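/- Let V(z) be the q×p matrix with (i,j) entry V_{−(j+1),−(i+1)}(z) (0 ≤ i ≤ q−1, 0 ≤ j ≤ p−1) and, for k ≥ 0, let V_k(z) be the q×p matrix with (i,j) entry Σ_{n≥0} ((E^{[k]})^n)_{i,j} z^{−n−1}. Then V(z) = V_0(z), and for every k ≥ 1 all the transformations below are defined and V(z) = (τ_{ν,0} ∘ τ_{ν,1} ∘ ⋯ ∘ τ_{ν,k−1})(V_k(z)). -/

import Mathlib

open scoped BigOperators
open Finset

noncomputable section

/-- The field `ℂ((z⁻¹))`, realized as Laurent series in the variable `t = z⁻¹`. -/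
abbrev LS : Type := LaurentSeries ℂ

/-- The element `z` of `ℂ((z⁻¹))` (i.e. `t⁻¹`). -/
def zLS : LS := HahnSeries.single (-1 : ℤ) (1 : ℂ)

/-- Constant (scalar) Laurent series. -/
def CLS (c : ℂ) : LS := HahnSeries.C c

/-- The generating series `Σ_{n ≥ 0} c n · z^{-n-1}` in `ℂ((z⁻¹))`. -/
def gen (c : ℕ → ℂ) : LS :=
  HahnSeries.single (1 : ℤ) (1 : ℂ) * (HahnSeries.ofPowerSeries ℤ ℂ) (PowerSeries.mk c)

/-- Weight of a step of displacement `s` starting at height `h`: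
`a_h^{(s)}` if `s ≥ 0`, and `a_{h+s}^{(s)}` if `s < 0`.  (Here `a k n = aₙ⁽ᵏ⁾`.) -/
def stepW (a : ℤ → ℤ → ℂ) (h s : ℤ) : ℂ := if 0 ≤ s then a s h else a s (h + s)

/-- Extend a finite step sequence by zero. -/
def ext {n : ℕ} (s : Fin n → ℤ) : ℕ → ℤ := fun t => if h : t < n then s ⟨t, h⟩ else 0

/-- Height after `k` steps, starting at height `i`. -/
def hgt (i : ℤ) (σ : ℕ → ℤ) (k : ℕ) : ℤ := i + ∑ t ∈ Finset.range k, σ t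

/-- Weight of the lattice path of length `n` starting at height `i` with steps `σ`. -/
def wgt (a : ℤ → ℤ → ℂ) (n : ℕ) (i : ℤ) (σ : ℕ → ℤ) : ℂ :=
  ∏ k ∈ Finset.range n, stepW a (hgt i σ k) (σ k)

/-- All admissible step sequences of length `n` (each step in `[-p, q]`). -/
def steps (p q n : ℕ) : Finset (Fin n → ℤ) :=
  Fintype.piFinset fun _ => Finset.Icc (-(p : ℤ)) (q : ℤ)

/-- `A_{[n,i,j]}`: weight polynomial of paths of length `n` from `(0,i)` to `(n,j)`
staying at height `≥ 0`. -/
def Apoly (p q : ℕ) (a : ℤ → ℤ → ℂ) (n : ℕ) (i j : ℤ) : ℂ :=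
  ∑ s ∈ steps p q n,
    if hgt i (ext s) n = j ∧ ∀ k ≤ n, 0 ≤ hgt i (ext s) k then wgt a n i (ext s) else 0

/-- `W_{[n,i,j]}`: weight polynomial of unrestricted paths of length `n` from `(0,i)` to `(n,j)`. -/
def Wpoly (p q : ℕ) (a : ℤ → ℤ → ℂ) (n : ℕ) (i j : ℤ) : ℂ :=
  ∑ s ∈ steps p q n, if hgt i (ext s) n = j then wgt a n i (ext s) else 0

/-- `V_{[n,i,j]}`: weight polynomial of paths of length `n` from `(0,i)` to `(n,j)`
staying at height `≤ -1`. -/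
def Vpoly (p q : ℕ) (a : ℤ → ℤ → ℂ) (n : ℕ) (i j : ℤ) : ℂ :=
  ∑ s ∈ steps p q n,
    if hgt i (ext s) n = j ∧ ∀ k ≤ n, hgt i (ext s) k ≤ -1 then wgt a n i (ext s) else 0

/-- `A_{[ℓ,i,j,N]}`: weight polynomial of paths of length `ℓ` from `(0,i)` to `(ℓ,j)`
with all heights in `{0, …, N-1}`. -/
def Aboxpoly (p q : ℕ) (a : ℤ → ℤ → ℂ) (N ℓ : ℕ) (i j : ℤ) : ℂ :=
  ∑ s ∈ steps p q ℓ,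
    if hgt i (ext s) ℓ = j ∧ ∀ k ≤ ℓ, 0 ≤ hgt i (ext s) k ∧ hgt i (ext s) k ≤ (N : ℤ) - 1
    then wgt a ℓ i (ext s) else 0

/-- The generating series `A_{i,j}(z)`. -/
def Aser (p q : ℕ) (a : ℤ → ℤ → ℂ) (i j : ℤ) : LS := gen fun n => Apoly p q a n i j

/-- The generating series `W_{i,j}(z)`. -/
def Wser (p q : ℕ) (a : ℤ → ℤ → ℂ) (i j : ℤ) : LS := gen fun n => Wpoly p q a n i j

/-- The generating series `V_{i,j}(z)`. -/
def Vser (p q : ℕ) (a : ℤ → ℤ → ℂ) (i j : ℤ) : LS := gen fun n => Vpoly p q a n i j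


/-- The one-sided banded matrix `H`: `h_{i,j} = a_{min(i,j)}^{(j-i)}` when `-p ≤ j-i ≤ q`. -/
def Hmat (p q : ℕ) (a : ℤ → ℤ → ℂ) (i j : ℕ) : ℂ :=
  if -(p : ℤ) ≤ (j : ℤ) - (i : ℤ) ∧ (j : ℤ) - (i : ℤ) ≤ (q : ℤ) then
    a ((j : ℤ) - (i : ℤ)) (min (i : ℤ) (j : ℤ)) else 0

/-- Entrywise power of a one-sided matrix whose rows are supported on `[0, i + B]`:
`(M^n)_{i,j}`. -/
def onePow (M : ℕ → ℕ → ℂ) (B : ℕ) : ℕ → ℕ → ℕ → ℂ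
  | 0, i, j => if i = j then 1 else 0
  | n + 1, i, j => ∑ r ∈ Finset.range (i + B + 1), M i r * onePow M B n r j

/-- The transformation `T` on `q × p` matrices (over a field) with nonzero `(0,0)` entry. -/
def Tmat {F : Type*} [Field F] {q p : ℕ} (hq : 0 < q) (hp : 0 < p)
    (A : Matrix (Fin q) (Fin p) F) : Matrix (Fin q) (Fin p) F := fun i j =>
  if hi : (i : ℕ) + 1 < q then
    if hj : (j : ℕ) + 1 < p then
      (A ⟨(i : ℕ) + 1, hi⟩ ⟨(j : ℕ) + 1, hj⟩ * A ⟨0, hq⟩ ⟨0, hp⟩ -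
          A ⟨0, hq⟩ ⟨(j : ℕ) + 1, hj⟩ * A ⟨(i : ℕ) + 1, hi⟩ ⟨0, hp⟩) / A ⟨0, hq⟩ ⟨0, hp⟩
    else A ⟨(i : ℕ) + 1, hi⟩ ⟨0, hp⟩ / A ⟨0, hq⟩ ⟨0, hp⟩
  else
    if hj : (j : ℕ) + 1 < p then -A ⟨0, hq⟩ ⟨(j : ℕ) + 1, hj⟩ / A ⟨0, hq⟩ ⟨0, hp⟩
    else 1 / A ⟨0, hq⟩ ⟨0, hp⟩

/-- The inverse transformation `T⁻¹` on `q × p` matrices with nonzero `(q-1,p-1)` entry. -/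
def Tinv {F : Type*} [Field F] {q p : ℕ} (hq : 0 < q) (hp : 0 < p)
    (B : Matrix (Fin q) (Fin p) F) : Matrix (Fin q) (Fin p) F := fun i j =>
  if hi : (i : ℕ) = 0 then
    if hj : (j : ℕ) = 0 then
      1 / B ⟨q - 1, Nat.sub_lt hq one_pos⟩ ⟨p - 1, Nat.sub_lt hp one_pos⟩
    else
      -B ⟨q - 1, Nat.sub_lt hq one_pos⟩ ⟨(j : ℕ) - 1, by have := j.isLt; omega⟩ /
        B ⟨q - 1, Nat.sub_lt hq one_pos⟩ ⟨p - 1, Nat.sub_lt hp one_pos⟩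
  else
    if hj : (j : ℕ) = 0 then
      B ⟨(i : ℕ) - 1, by have := i.isLt; omega⟩ ⟨p - 1, Nat.sub_lt hp one_pos⟩ /
        B ⟨q - 1, Nat.sub_lt hq one_pos⟩ ⟨p - 1, Nat.sub_lt hp one_pos⟩
    else
      (B ⟨(i : ℕ) - 1, by have := i.isLt; omega⟩ ⟨(j : ℕ) - 1, by have := j.isLt; omega⟩ *
          B ⟨q - 1, Nat.sub_lt hq one_pos⟩ ⟨p - 1, Nat.sub_lt hp one_pos⟩ -
        B ⟨(i : ℕ) - 1, by have := i.isLt; omega⟩ ⟨p - 1, Nat.sub_lt hp one_pos⟩ *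
          B ⟨q - 1, Nat.sub_lt hq one_pos⟩ ⟨(j : ℕ) - 1, by have := j.isLt; omega⟩) /
        B ⟨q - 1, Nat.sub_lt hq one_pos⟩ ⟨p - 1, Nat.sub_lt hp one_pos⟩

/-- `chainFrom τ k X m = τ_m (τ_{m+1} ( ⋯ (τ_{k-1} X)))`; in particular
`chainFrom τ k X 0 = (τ_0 ∘ τ_1 ∘ ⋯ ∘ τ_{k-1}) X`. -/
def chainFrom {M : Type*} (τ : ℕ → M → M) (k : ℕ) (X : M) (m : ℕ) : M :=
  (List.range (k - m)).foldr (fun t Y => τ (m + t) Y) X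

/-- The `q × p` matrix `α_k(z)`, whose only nonzero entry is `z - a_k^{(0)}` at `(q-1, p-1)`. -/
def alphaZ (q p : ℕ) (a : ℤ → ℤ → ℂ) (k : ℕ) : Matrix (Fin q) (Fin p) LS := fun i j =>
  if (i : ℕ) = q - 1 ∧ (j : ℕ) = p - 1 then zLS - CLS (a 0 (k : ℤ)) else 0

/-- The `q × q` matrix `α_k⁺`: first `q-1` rows of the identity, last row
`(-a_k^{(1)}, …, -a_k^{(q)})`. -/
def alphaP (q : ℕ) (a : ℤ → ℤ → ℂ) (k : ℕ) : Matrix (Fin q) (Fin q) LS := fun i j =>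
  if (i : ℕ) = q - 1 then -CLS (a (((j : ℕ) : ℤ) + 1) (k : ℤ))
  else if i = j then 1 else 0

/-- The `p × p` matrix `α_k⁻`: first `p-1` columns of the identity, last column
`(a_k^{(-1)}, …, a_k^{(-p)})ᵀ`. -/
def alphaM (p : ℕ) (a : ℤ → ℤ → ℂ) (k : ℕ) : Matrix (Fin p) (Fin p) LS := fun i j =>
  if (j : ℕ) = p - 1 then CLS (a (-(((i : ℕ) : ℤ) + 1)) (k : ℤ))
  else if i = j then 1 else 0

/-- `F_r(z)`: the `q × p` matrix of resolvent series of `H^{[r]}` (delete the first `r` rows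
and columns of `H`); `F_0 = F`. -/
def Fmat (p q : ℕ) (a : ℤ → ℤ → ℂ) (r : ℕ) : Matrix (Fin q) (Fin p) LS := fun i j =>
  gen fun n => onePow (fun i' j' => Hmat p q a (i' + r) (j' + r)) q n (i : ℕ) (j : ℕ)

/-- The transformation `τ_{α,k}(X) = T⁻¹(α_k(z) + α_k⁺ X α_k⁻)`. -/
def tauAlpha (p q : ℕ) (hq : 0 < q) (hp : 0 < p) (a : ℤ → ℤ → ℂ) (k : ℕ)
    (X : Matrix (Fin q) (Fin p) LS) : Matrix (Fin q) (Fin p) LS :=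
  Tinv hq hp (alphaZ q p a k + alphaP q a k * X * alphaM p a k)

/-- The banded matrix `E`: `E_{i,j} = a_{-(max(i,j)+1)}^{(j-i)}` when `-p ≤ j-i ≤ q`. -/
def Emat (p q : ℕ) (a : ℤ → ℤ → ℂ) (i j : ℕ) : ℂ :=
  if -(p : ℤ) ≤ (j : ℤ) - (i : ℤ) ∧ (j : ℤ) - (i : ℤ) ≤ (q : ℤ) then
    a ((j : ℤ) - (i : ℤ)) (-((max i j : ℕ) : ℤ) - 1) else 0

/-- `V_r(z)`: the `q × p` matrix of resolvent series of `E^{[r]}` (delete the first `r` rows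
and columns of `E`). -/
def Vmatr (p q : ℕ) (a : ℤ → ℤ → ℂ) (r : ℕ) : Matrix (Fin q) (Fin p) LS := fun i j =>
  gen fun n => onePow (fun i' j' => Emat p q a (i' + r) (j' + r)) q n (i : ℕ) (j : ℕ)

/-- `V(z)`: the `q × p` matrix with `(i,j)` entry `V_{-(j+1),-(i+1)}(z)`. -/
def VmatV (p q : ℕ) (a : ℤ → ℤ → ℂ) : Matrix (Fin q) (Fin p) LS := fun i j =>
  Vser p q a (-(((j : ℕ) : ℤ) + 1)) (-(((i : ℕ) : ℤ) + 1))

/-- The `q × p` matrix `ν_k(z)`: only nonzero entry `z - a_{-(k+1)}^{(0)}` at `(q-1,p-1)`. -/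
def nuZ (p q : ℕ) (a : ℤ → ℤ → ℂ) (k : ℕ) : Matrix (Fin q) (Fin p) LS := fun i j =>
  if (i : ℕ) = q - 1 ∧ (j : ℕ) = p - 1 then zLS - CLS (a 0 (-((k : ℤ) + 1))) else 0

/-- The `q × q` matrix `ν_k⁺`: identity except the last row, whose `i`-th entry (1-based) is
`-a_{-(k+i+1)}^{(i)}`. -/
def nuP (q : ℕ) (a : ℤ → ℤ → ℂ) (k : ℕ) : Matrix (Fin q) (Fin q) LS := fun i j =>
  if (i : ℕ) = q - 1 then -CLS (a (((j : ℕ) : ℤ) + 1) (-((k : ℤ) + ((j : ℕ) : ℤ) + 2)))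
  else if i = j then 1 else 0

/-- The `p × p` matrix `ν_k⁻`: identity except the last column, whose `j`-th entry (1-based) is
`a_{-(k+j+1)}^{(-j)}`. -/
def nuM (p : ℕ) (a : ℤ → ℤ → ℂ) (k : ℕ) : Matrix (Fin p) (Fin p) LS := fun i j =>
  if (j : ℕ) = p - 1 then CLS (a (-(((i : ℕ) : ℤ) + 1)) (-((k : ℤ) + ((i : ℕ) : ℤ) + 2)))
  else if i = j then 1 else 0

/-- The transformation `τ_{ν,k}(X) = T⁻¹(ν_k(z) + ν_k⁺ X ν_k⁻)`. -/
def tauNu (p q : ℕ) (hq : 0 < q) (hp : 0 < p) (a : ℤ → ℤ → ℂ) (k : ℕ)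
    (X : Matrix (Fin q) (Fin p) LS) : Matrix (Fin q) (Fin p) LS :=
  Tinv hq hp (nuZ p q a k + nuP q a k * X * nuM p a k)

section GenLemmas

lemma gen_eq (c : ℕ → ℂ) :
    gen c = (HahnSeries.ofPowerSeries ℤ ℂ) (PowerSeries.X * PowerSeries.mk c) := by
  rw [gen, map_mul, HahnSeries.ofPowerSeries_X]

lemma X_mul_mk (c : ℕ → ℂ) :
    (PowerSeries.X * PowerSeries.mk c : PowerSeries ℂ) =
      PowerSeries.mk (fun n => if n = 0 then 0 else c (n - 1)) := by
  refine PowerSeries.ext fun n => ?_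
  cases n with
  | zero => simp
  | succ m => simp [PowerSeries.coeff_succ_X_mul]

lemma mk_mul_mk (c d : ℕ → ℂ) :
    (PowerSeries.mk c * PowerSeries.mk d : PowerSeries ℂ) =
      PowerSeries.mk (fun n => ∑ l ∈ Finset.range (n + 1), c l * d (n - l)) := by
  refine PowerSeries.ext fun n => ?_
  rw [PowerSeries.coeff_mul, Finset.Nat.sum_antidiagonal_eq_sum_range_succ_mk]
  simp

lemma mk_mul_X_mul_mk (c d : ℕ → ℂ) :
    (PowerSeries.mk c * (PowerSeries.X * PowerSeries.mk d) : PowerSeries ℂ) =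
      PowerSeries.mk (fun n => ∑ l ∈ Finset.range n, c l * d (n - 1 - l)) := by
  rw [X_mul_mk, mk_mul_mk]
  refine congrArg PowerSeries.mk (funext fun n => ?_)
  rw [Finset.sum_range_succ]
  simp only [Nat.sub_self, reduceIte, mul_zero, add_zero]
  refine Finset.sum_congr rfl fun l hl => ?_
  have hl' := Finset.mem_range.mp hl
  rw [if_neg (by omega)]
  congr 2
  omega

lemma gen_mul (c d : ℕ → ℂ) :
    gen c * gen d = gen (fun n => ∑ l ∈ Finset.range n, c l * d (n - 1 - l)) := by
  rw [gen_eq, gen_eq, gen_eq, ← map_mul]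
  congr 1
  rw [show (PowerSeries.X * PowerSeries.mk c * (PowerSeries.X * PowerSeries.mk d)
        : PowerSeries ℂ)
      = PowerSeries.X * (PowerSeries.mk c * (PowerSeries.X * PowerSeries.mk d)) by ring,
    mk_mul_X_mul_mk]

lemma gen_injective : Function.Injective gen := by
  intro c d h
  rw [gen_eq, gen_eq] at h
  have h2 := HahnSeries.ofPowerSeries_injective h
  have h3 := mul_left_cancel₀ (PowerSeries.X_ne_zero (R := ℂ)) h2
  funext n
  have := congrArg (PowerSeries.coeff n) h3
  simpa using this

lemma gen_zero : gen (fun _ => 0) = 0 := by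
  rw [gen_eq]
  have : (PowerSeries.mk (fun _ => (0:ℂ))) = 0 := by
    refine PowerSeries.ext fun n => ?_; simp
  rw [this, mul_zero, map_zero]

lemma gen_add (c d : ℕ → ℂ) : gen (fun n => c n + d n) = gen c + gen d := by
  rw [gen_eq, gen_eq, gen_eq, ← map_add, ← mul_add]
  congr 2

lemma CLS_mul_gen (e : ℂ) (c : ℕ → ℂ) : CLS e * gen c = gen (fun n => e * c n) := by
  rw [gen_eq, gen_eq, CLS, ← HahnSeries.ofPowerSeries_C (Γ := ℤ), ← map_mul]
  congr 1
  rw [show (PowerSeries.C e * (PowerSeries.X * PowerSeries.mk c) : PowerSeries ℂ)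
      = PowerSeries.X * (PowerSeries.C e * PowerSeries.mk c) by ring]
  congr 1
  refine PowerSeries.ext fun n => ?_
  simp [PowerSeries.coeff_C_mul]

lemma gen_mul_CLS (e : ℂ) (c : ℕ → ℂ) : gen c * CLS e = gen (fun n => c n * e) := by
  rw [mul_comm, CLS_mul_gen]
  simp [mul_comm]

lemma z_mul_gen (c : ℕ → ℂ) :
    zLS * gen c = (HahnSeries.ofPowerSeries ℤ ℂ) (PowerSeries.mk c) := by
  rw [gen, zLS, ← mul_assoc, HahnSeries.single_mul_single]
  norm_num [HahnSeries.single_zero_one]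

lemma ofPS_mk_eq (c : ℕ → ℂ) :
    (HahnSeries.ofPowerSeries ℤ ℂ) (PowerSeries.mk c) =
      CLS (c 0) + gen (fun n => c (n + 1)) := by
  rw [gen_eq, CLS, ← HahnSeries.ofPowerSeries_C (Γ := ℤ), ← map_add]
  congr 1
  refine PowerSeries.ext fun n => ?_
  cases n with
  | zero => simp
  | succ m => simp [PowerSeries.coeff_succ_X_mul, PowerSeries.coeff_C]

lemma gen_sum {α : Type*} (s : Finset α) (F : α → ℕ → ℂ) :
    gen (fun n => ∑ x ∈ s, F x n) = ∑ x ∈ s, gen (F x) := by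
  induction s using Finset.cons_induction with
  | empty => simpa using gen_zero
  | cons a s ha ih =>
    rw [Finset.sum_cons, ← ih, ← gen_add]
    simp [Finset.sum_cons]

lemma gen_ne_zero_of (c : ℕ → ℂ) (h : c 0 ≠ 0) : gen c ≠ 0 := by
  intro h0
  rw [← gen_zero] at h0
  have := congrFun (gen_injective h0) 0
  exact h this

end GenLemmas
section OnePowLemmas

lemma onePow_succ (M : ℕ → ℕ → ℂ) (B n i j : ℕ) :
    onePow M B (n+1) i j = ∑ r ∈ Finset.range (i + B + 1), M i r * onePow M B n r j := rfl

lemma onePow_vanish (M : ℕ → ℕ → ℂ) (B : ℕ)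
    (hU : ∀ i r : ℕ, i + B < r → M i r = 0) :
    ∀ n i j : ℕ, i + n * B < j → onePow M B n i j = 0 := by
  intro n
  induction n with
  | zero =>
    intro i j h
    simp only [onePow]
    rw [if_neg (by omega)]
  | succ n ih =>
    intro i j h
    rw [onePow_succ]
    refine Finset.sum_eq_zero fun r hr => ?_
    have hr' := Finset.mem_range.mp hr
    have hmul : (n+1)*B = n*B + B := Nat.succ_mul n B
    rw [ih r j (by omega), mul_zero]

lemma onePow_last (M : ℕ → ℕ → ℂ) (B : ℕ)
    (hU : ∀ i r : ℕ, i + B < r → M i r = 0) :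
    ∀ n i j T : ℕ, i + n * B + B + 1 ≤ T →
      onePow M B (n+1) i j = ∑ r ∈ Finset.range T, onePow M B n i r * M r j := by
  intro n
  induction n with
  | zero =>
    intro i j T hT
    rw [onePow_succ]
    have h1 : ∑ r ∈ Finset.range (i + B + 1), M i r * onePow M B 0 r j = M i j := by
      simp only [onePow]
      rcases lt_or_ge j (i + B + 1) with h | h
      · rw [Finset.sum_eq_single j]
        · simp
        · intro b _ hb; simp [if_neg hb]
        · intro hj; exact absurd (Finset.mem_range.mpr h) hj
      · rw [hU i j (by omega)]
        refine Finset.sum_eq_zero fun r hr => ?_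
        have := Finset.mem_range.mp hr
        rw [if_neg (by omega), mul_zero]
    have h2 : ∑ r ∈ Finset.range T, onePow M B 0 i r * M r j = M i j := by
      simp only [onePow]
      rw [Finset.sum_eq_single i]
      · simp
      · intro b _ hb; simp [if_neg (Ne.symm hb)]
      · intro hi; exact absurd (Finset.mem_range.mpr (by omega)) hi
    rw [h1, h2]
  | succ n ih =>
    intro i j T hT
    rw [onePow_succ]
    have key : ∀ r ∈ Finset.range (i + B + 1),
        M i r * onePow M B (n+1) r j
          = M i r * ∑ s ∈ Finset.range T, onePow M B n r s * M s j := by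
      intro r hr
      have hr' := Finset.mem_range.mp hr
      have hmul : (n+1)*B = n*B + B := Nat.succ_mul n B
      rw [ih r j T (by omega)]
    rw [Finset.sum_congr rfl key]
    simp only [Finset.mul_sum]
    rw [Finset.sum_comm]
    refine Finset.sum_congr rfl fun s hs => ?_
    rw [onePow_succ, Finset.sum_mul]
    refine Finset.sum_congr rfl fun r hr => ?_
    ring

lemma onePow_transpose (M : ℕ → ℕ → ℂ) (B B2 : ℕ)
    (hU : ∀ i r : ℕ, i + B < r → M i r = 0)
    (hL : ∀ i r : ℕ, r + B2 < i → M i r = 0) :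
    ∀ n i j : ℕ, onePow (fun x y => M y x) B2 n j i = onePow M B n i j := by
  intro n
  induction n with
  | zero =>
    intro i j
    simp only [onePow]
    by_cases h : i = j
    · simp [h]
    · rw [if_neg (Ne.symm h), if_neg h]
  | succ n ih =>
    intro i j
    set T := max (j + B2 + 1) (i + n * B + B + 1) with hT
    rw [onePow_last M B hU n i j T (le_max_right _ _), onePow_succ]
    have hsub : Finset.range (j + B2 + 1) ⊆ Finset.range T :=
      Finset.range_subset_range.mpr (le_max_left _ _)
    rw [← Finset.sum_subset hsub (fun r _ hr => by
      have : j + B2 < r := by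
        have := Finset.mem_range.not.mp hr
        omega
      rw [hL r j this, mul_zero])]
    refine Finset.sum_congr rfl fun r hr => ?_
    rw [ih]
    ring

end OnePowLemmas
section FirstVisit

/-- shift of a one-sided matrix (delete first row and column) -/
def shiftM (M : ℕ → ℕ → ℂ) : ℕ → ℕ → ℂ := fun i j => M (i+1) (j+1)

@[simp] lemma shiftM_apply (M : ℕ → ℕ → ℂ) (i j : ℕ) : shiftM M i j = M (i+1) (j+1) := rfl

/-- avoid-0 part -/
def F0 (M : ℕ → ℕ → ℂ) (B : ℕ) (n i x : ℕ) : ℂ :=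
  if x = 0 then 0 else onePow (shiftM M) B n i (x-1)

/-- first-hit-of-0 coefficient -/
def hitc (M : ℕ → ℕ → ℂ) (B B2 : ℕ) (i l : ℕ) : ℂ :=
  ∑ j' ∈ Finset.range B2, onePow (shiftM M) B l i j' * M (j'+1) 0

lemma hitc_zero (M : ℕ → ℕ → ℂ) (B B2 : ℕ)
    (hL : ∀ i r : ℕ, r + B2 < i → M i r = 0) (i : ℕ) :
    hitc M B B2 i 0 = M (i+1) 0 := by
  unfold hitc
  rcases lt_or_ge i B2 with h | h
  · rw [Finset.sum_eq_single i]
    · simp [onePow]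
    · intro b _ hb; simp only [onePow]; rw [if_neg (Ne.symm hb), zero_mul]
    · intro hi; exact absurd (Finset.mem_range.mpr h) hi
  · rw [hL (i+1) 0 (by omega)]
    refine Finset.sum_eq_zero fun j' hj' => ?_
    have := Finset.mem_range.mp hj'
    simp only [onePow]; rw [if_neg (by omega), zero_mul]

lemma hitc_succ (M : ℕ → ℕ → ℂ) (B B2 : ℕ) (i l : ℕ) :
    hitc M B B2 i (l+1)
      = ∑ r ∈ Finset.range (i+B+1), M (i+1) (r+1) * hitc M B B2 r l := by
  unfold hitc
  simp only [onePow_succ, shiftM_apply, Finset.sum_mul, Finset.mul_sum]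
  rw [Finset.sum_comm]
  refine Finset.sum_congr rfl fun r _ => Finset.sum_congr rfl fun j' _ => by ring

lemma L12 (M : ℕ → ℕ → ℂ) (B B2 : ℕ)
    (hL : ∀ i r : ℕ, r + B2 < i → M i r = 0) :
    ∀ n i x : ℕ, onePow M B n (i+1) x
      = F0 M B n i x
        + ∑ l ∈ Finset.range n, hitc M B B2 i l * onePow M B (n-1-l) 0 x := by
  intro n
  induction n with
  | zero =>
    intro i x
    simp only [Finset.range_zero, Finset.sum_empty, add_zero, F0, onePow]
    cases x with
    | zero => simp
    | succ m => simp
  | succ n ih =>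
    intro i x
    have hstep : onePow M B (n+1) (i+1) x
        = ∑ r ∈ Finset.range (i+B+1), M (i+1) (r+1) * onePow M B n (r+1) x
          + M (i+1) 0 * onePow M B n 0 x := by
      rw [onePow_succ]
      have h : i + 1 + B + 1 = (i + B + 1) + 1 := by omega
      rw [h, Finset.sum_range_succ']
    rw [hstep]
    have hih : ∀ r ∈ Finset.range (i+B+1),
        M (i+1) (r+1) * onePow M B n (r+1) x
          = M (i+1) (r+1) * F0 M B n r x
            + ∑ l ∈ Finset.range n,
                M (i+1) (r+1) * (hitc M B B2 r l * onePow M B (n-1-l) 0 x) := by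
      intro r _
      rw [ih r x, mul_add, Finset.mul_sum]
    rw [Finset.sum_congr rfl hih, Finset.sum_add_distrib]
    have hF0 : F0 M B (n+1) i x
        = ∑ r ∈ Finset.range (i+B+1), M (i+1) (r+1) * F0 M B n r x := by
      unfold F0
      cases x with
      | zero => simp
      | succ m =>
        simp only [Nat.succ_ne_zero, if_false, Nat.add_sub_cancel]
        rw [onePow_succ]
        simp only [shiftM_apply]
    have hsplit : ∑ l ∈ Finset.range (n+1), hitc M B B2 i l * onePow M B (n+1-1-l) 0 x
        = ∑ l ∈ Finset.range n, hitc M B B2 i (l+1) * onePow M B (n-1-l) 0 x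
          + M (i+1) 0 * onePow M B n 0 x := by
      rw [Finset.sum_range_succ']
      congr 1
      · refine Finset.sum_congr rfl fun l hl => ?_
        congr 2
        omega
      · rw [hitc_zero M B B2 hL i]
        norm_num
    have hmid : ∑ l ∈ Finset.range n, hitc M B B2 i (l+1) * onePow M B (n-1-l) 0 x
        = ∑ r ∈ Finset.range (i+B+1), ∑ l ∈ Finset.range n,
            M (i+1) (r+1) * (hitc M B B2 r l * onePow M B (n-1-l) 0 x) := by
      rw [Finset.sum_comm]
      refine Finset.sum_congr rfl fun l _ => ?_
      rw [hitc_succ, Finset.sum_mul]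
      refine Finset.sum_congr rfl fun r _ => by ring
    rw [hF0, hsplit, hmid]
    ring

end FirstVisit
section L34
variable (M : ℕ → ℕ → ℂ) (B B2 : ℕ)

lemma L3 (hU : ∀ i r : ℕ, i + B < r → M i r = 0)
    (hL : ∀ i r : ℕ, r + B2 < i → M i r = 0) (n j : ℕ) :
    onePow M B n 0 (j+1)
      = ∑ l ∈ Finset.range n,
          (∑ i' ∈ Finset.range B, onePow (shiftM M) B l i' j * M 0 (i'+1))
            * onePow M B (n-1-l) 0 0 := by
  have hNL : ∀ i r : ℕ, r + B < i → (fun x y => M y x) i r = 0 := fun i r h => hU r i h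
  have hU' : ∀ i r : ℕ, i + B < r → (shiftM M) i r = 0 :=
    fun i r h => hU (i+1) (r+1) (by omega)
  have hL' : ∀ i r : ℕ, r + B2 < i → (shiftM M) i r = 0 :=
    fun i r h => hL (i+1) (r+1) (by omega)
  have h1 : onePow M B n 0 (j+1) = onePow (fun x y => M y x) B2 n (j+1) 0 :=
    (onePow_transpose M B B2 hU hL n 0 (j+1)).symm
  rw [h1, L12 (fun x y => M y x) B2 B hNL n j 0]
  simp only [F0, reduceIte, zero_add]
  refine Finset.sum_congr rfl fun l _ => ?_
  congr 1
  · unfold hitc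
    refine Finset.sum_congr rfl fun i' _ => ?_
    congr 1
    have h2 : (shiftM (fun x y => M y x)) = (fun x y => (shiftM M) y x) := rfl
    rw [h2, onePow_transpose (shiftM M) B B2 hU' hL' l i' j]
  · exact onePow_transpose M B B2 hU hL (n-1-l) 0 0

lemma L4 (hL : ∀ i r : ℕ, r + B2 < i → M i r = 0) (n : ℕ) :
    onePow M B (n+1) 0 0
      = M 0 0 * onePow M B n 0 0
        + ∑ i' ∈ Finset.range B, M 0 (i'+1)
            * ∑ l ∈ Finset.range n, hitc M B B2 i' l * onePow M B (n-1-l) 0 0 := by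
  rw [onePow_succ]
  have h : 0 + B + 1 = B + 1 := by omega
  rw [h, Finset.sum_range_succ']
  rw [add_comm]
  congr 1
  refine Finset.sum_congr rfl fun i' _ => ?_
  rw [L12 M B B2 hL n i' 0]
  simp only [F0, reduceIte, zero_add, Finset.mul_sum]

end L34
section SeriesIdentities
variable (p q : ℕ) (a : ℤ → ℤ → ℂ)

def Ek (k : ℕ) : ℕ → ℕ → ℂ := fun i j => Emat p q a (i+k) (j+k)

lemma Ek_shift (k : ℕ) : shiftM (Ek p q a k) = Ek p q a (k+1) := by
  funext i j
  simp only [shiftM_apply, Ek]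
  congr 1 <;> omega

lemma Ek_hU (k : ℕ) : ∀ i r : ℕ, i + q < r → Ek p q a k i r = 0 := by
  intro i r h
  simp only [Ek, Emat]
  rw [if_neg]
  rintro ⟨_, h2⟩
  omega

lemma Ek_hL (k : ℕ) : ∀ i r : ℕ, r + p < i → Ek p q a k i r = 0 := by
  intro i r h
  simp only [Ek, Emat]
  rw [if_neg]
  rintro ⟨h1, _⟩
  omega

/-- the series `(V_k)_{i,j}` -/
def GserE (k : ℕ) (i j : ℕ) : LS := gen (fun n => onePow (Ek p q a k) q n i j)

lemma Vmatr_apply (k : ℕ) (i : Fin q) (j : Fin p) :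
    Vmatr p q a k i j = GserE p q a k (i : ℕ) (j : ℕ) := rfl

lemma GserE_ne (k : ℕ) : GserE p q a k 0 0 ≠ 0 := by
  refine gen_ne_zero_of _ ?_
  simp [onePow]

def rowHit (k i : ℕ) : LS :=
  ∑ j' ∈ Finset.range p, GserE p q a (k+1) i j' * CLS (Ek p q a k (j'+1) 0)

def colHit (k j : ℕ) : LS :=
  ∑ i' ∈ Finset.range q, GserE p q a (k+1) i' j * CLS (Ek p q a k 0 (i'+1))

lemma gen_hit_mul (c d : ℕ → ℂ) :
    gen (fun n => ∑ l ∈ Finset.range n, c l * d (n - 1 - l)) = gen c * gen d :=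
  (gen_mul c d).symm

lemma rowHit_eq (k i : ℕ) :
    gen (fun l => hitc (Ek p q a k) q p i l) = rowHit p q a k i := by
  have h : ∀ l, hitc (Ek p q a k) q p i l
      = ∑ j' ∈ Finset.range p,
          onePow (Ek p q a (k+1)) q l i j' * Ek p q a k (j'+1) 0 := by
    intro l; unfold hitc; rw [Ek_shift]
  calc gen (fun l => hitc (Ek p q a k) q p i l)
      = gen (fun l => ∑ j' ∈ Finset.range p,
          onePow (Ek p q a (k+1)) q l i j' * Ek p q a k (j'+1) 0) :=
        congrArg gen (funext h)
    _ = ∑ j' ∈ Finset.range p,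
          gen (fun l => onePow (Ek p q a (k+1)) q l i j' * Ek p q a k (j'+1) 0) :=
        gen_sum _ _
    _ = rowHit p q a k i :=
        Finset.sum_congr rfl fun j' _ =>
          (gen_mul_CLS (Ek p q a k (j'+1) 0)
            (fun l => onePow (Ek p q a (k+1)) q l i j')).symm

/-- first-visit decomposition, series form -/
lemma SA (k i x : ℕ) :
    GserE p q a k (i+1) x
      = gen (fun n => F0 (Ek p q a k) q n i x)
        + rowHit p q a k i * GserE p q a k 0 x := by
  calc GserE p q a k (i+1) x
      = gen (fun n => F0 (Ek p q a k) q n i x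
          + ∑ l ∈ Finset.range n,
              hitc (Ek p q a k) q p i l * onePow (Ek p q a k) q (n-1-l) 0 x) :=
        congrArg gen (funext fun n => L12 (Ek p q a k) q p (Ek_hL p q a k) n i x)
    _ = gen (fun n => F0 (Ek p q a k) q n i x)
        + gen (fun n => ∑ l ∈ Finset.range n,
            hitc (Ek p q a k) q p i l * onePow (Ek p q a k) q (n-1-l) 0 x) :=
        gen_add _ _
    _ = gen (fun n => F0 (Ek p q a k) q n i x)
        + gen (fun l => hitc (Ek p q a k) q p i l)
            * gen (fun m => onePow (Ek p q a k) q m 0 x) :=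
        congrArg (gen (fun n => F0 (Ek p q a k) q n i x) + ·)
          (gen_hit_mul (fun l => hitc (Ek p q a k) q p i l)
            (fun m => onePow (Ek p q a k) q m 0 x))
    _ = _ := by rw [rowHit_eq]; rfl

lemma SA1 (k i j : ℕ) :
    GserE p q a k (i+1) (j+1)
      = GserE p q a (k+1) i j + rowHit p q a k i * GserE p q a k 0 (j+1) := by
  rw [SA]
  congr 1
  refine congrArg gen (funext fun n => ?_)
  simp only [F0, Nat.succ_ne_zero, if_false, Nat.add_sub_cancel, Ek_shift]

lemma SA0 (k i : ℕ) :
    GserE p q a k (i+1) 0 = rowHit p q a k i * GserE p q a k 0 0 := by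
  rw [SA]
  have h0 : gen (fun n => F0 (Ek p q a k) q n i 0) = 0 := by
    rw [show (fun n => F0 (Ek p q a k) q n i 0) = (fun _ => (0:ℂ)) from
      funext fun n => by simp [F0]]
    exact gen_zero
  rw [h0, zero_add]

lemma SB (k j : ℕ) :
    GserE p q a k 0 (j+1) = colHit p q a k j * GserE p q a k 0 0 := by
  have hL3 : ∀ n, onePow (Ek p q a k) q n 0 (j+1)
      = ∑ l ∈ Finset.range n,
          (∑ i' ∈ Finset.range q,
            onePow (Ek p q a (k+1)) q l i' j * Ek p q a k 0 (i'+1))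
            * onePow (Ek p q a k) q (n-1-l) 0 0 := by
    intro n
    have h := L3 (Ek p q a k) q p (Ek_hU p q a k) (Ek_hL p q a k) n j
    rw [Ek_shift] at h
    exact h
  calc GserE p q a k 0 (j+1)
      = gen (fun n => ∑ l ∈ Finset.range n,
          (∑ i' ∈ Finset.range q,
            onePow (Ek p q a (k+1)) q l i' j * Ek p q a k 0 (i'+1))
            * onePow (Ek p q a k) q (n-1-l) 0 0) := congrArg gen (funext hL3)
    _ = gen (fun l => ∑ i' ∈ Finset.range q,
          onePow (Ek p q a (k+1)) q l i' j * Ek p q a k 0 (i'+1))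
          * gen (fun m => onePow (Ek p q a k) q m 0 0) :=
        gen_hit_mul (fun l => ∑ i' ∈ Finset.range q,
          onePow (Ek p q a (k+1)) q l i' j * Ek p q a k 0 (i'+1))
          (fun m => onePow (Ek p q a k) q m 0 0)
    _ = colHit p q a k j * GserE p q a k 0 0 := by
        refine congrArg (· * GserE p q a k 0 0) ?_
        calc gen (fun l => ∑ i' ∈ Finset.range q,
              onePow (Ek p q a (k+1)) q l i' j * Ek p q a k 0 (i'+1))
            = ∑ i' ∈ Finset.range q,
                gen (fun l => onePow (Ek p q a (k+1)) q l i' j * Ek p q a k 0 (i'+1)) :=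
              gen_sum _ _
          _ = colHit p q a k j :=
              Finset.sum_congr rfl fun i' _ =>
                (gen_mul_CLS (Ek p q a k 0 (i'+1))
                  (fun l => onePow (Ek p q a (k+1)) q l i' j)).symm

lemma CLS_one : CLS 1 = (1 : LS) := map_one HahnSeries.C

lemma SC (k : ℕ) :
    zLS * GserE p q a k 0 0
      = 1 + (CLS (Ek p q a k 0 0)
          + ∑ i' ∈ Finset.range q, CLS (Ek p q a k 0 (i'+1)) * rowHit p q a k i')
          * GserE p q a k 0 0 := by
  have h1 : zLS * GserE p q a k 0 0
      = CLS (onePow (Ek p q a k) q 0 0 0)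
        + gen (fun n => onePow (Ek p q a k) q (n+1) 0 0) :=
    (z_mul_gen _).trans (ofPS_mk_eq _)
  have h2 : gen (fun n => onePow (Ek p q a k) q (n+1) 0 0)
      = CLS (Ek p q a k 0 0) * GserE p q a k 0 0
        + ∑ i' ∈ Finset.range q, CLS (Ek p q a k 0 (i'+1))
            * (rowHit p q a k i' * GserE p q a k 0 0) := by
    calc gen (fun n => onePow (Ek p q a k) q (n+1) 0 0)
        = gen (fun n => Ek p q a k 0 0 * onePow (Ek p q a k) q n 0 0
            + ∑ i' ∈ Finset.range q, Ek p q a k 0 (i'+1)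
                * ∑ l ∈ Finset.range n,
                    hitc (Ek p q a k) q p i' l * onePow (Ek p q a k) q (n-1-l) 0 0) :=
          congrArg gen (funext fun n => L4 (Ek p q a k) q p (Ek_hL p q a k) n)
      _ = gen (fun n => Ek p q a k 0 0 * onePow (Ek p q a k) q n 0 0)
          + gen (fun n => ∑ i' ∈ Finset.range q, Ek p q a k 0 (i'+1)
              * ∑ l ∈ Finset.range n,
                  hitc (Ek p q a k) q p i' l * onePow (Ek p q a k) q (n-1-l) 0 0) :=
          gen_add _ _
      _ = CLS (Ek p q a k 0 0) * GserE p q a k 0 0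
          + ∑ i' ∈ Finset.range q,
              gen (fun n => Ek p q a k 0 (i'+1)
                * ∑ l ∈ Finset.range n,
                    hitc (Ek p q a k) q p i' l * onePow (Ek p q a k) q (n-1-l) 0 0) := by
          refine congrArg₂ (· + ·) ?_ ?_
          · exact (CLS_mul_gen (Ek p q a k 0 0)
              (fun n => onePow (Ek p q a k) q n 0 0)).symm
          · exact gen_sum _ _
      _ = _ := by
          refine congrArg _ (Finset.sum_congr rfl fun i' _ => ?_)
          calc gen (fun n => Ek p q a k 0 (i'+1)
                * ∑ l ∈ Finset.range n,
                    hitc (Ek p q a k) q p i' l * onePow (Ek p q a k) q (n-1-l) 0 0)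
              = CLS (Ek p q a k 0 (i'+1))
                * gen (fun n => ∑ l ∈ Finset.range n,
                    hitc (Ek p q a k) q p i' l * onePow (Ek p q a k) q (n-1-l) 0 0) :=
                (CLS_mul_gen (Ek p q a k 0 (i'+1))
                  (fun n => ∑ l ∈ Finset.range n,
                    hitc (Ek p q a k) q p i' l * onePow (Ek p q a k) q (n-1-l) 0 0)).symm
            _ = CLS (Ek p q a k 0 (i'+1))
                * (gen (fun l => hitc (Ek p q a k) q p i' l)
                    * gen (fun m => onePow (Ek p q a k) q m 0 0)) :=
                congrArg (CLS (Ek p q a k 0 (i'+1)) * ·)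
                  (gen_hit_mul (fun l => hitc (Ek p q a k) q p i' l)
                    (fun m => onePow (Ek p q a k) q m 0 0))
            _ = _ := by rw [rowHit_eq]; rfl
  rw [h1, h2]
  have hc : onePow (Ek p q a k) q 0 0 0 = 1 := by simp [onePow]
  rw [hc, CLS_one]
  have h3 : ∑ i' ∈ Finset.range q,
      CLS (Ek p q a k 0 (i'+1)) * (rowHit p q a k i' * GserE p q a k 0 0)
      = (∑ i' ∈ Finset.range q, CLS (Ek p q a k 0 (i'+1)) * rowHit p q a k i')
          * GserE p q a k 0 0 := by
    rw [Finset.sum_mul]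
    exact Finset.sum_congr rfl fun i' _ => (mul_assoc _ _ _).symm
  rw [h3, ← add_mul]

end SeriesIdentities
section MatrixLemmas

variable {F : Type*} [Field F] {q p : ℕ}

lemma Tmat_hh (hq : 0 < q) (hp : 0 < p) (A : Matrix (Fin q) (Fin p) F)
    (i : Fin q) (j : Fin p) (hi : (i:ℕ)+1 < q) (hj : (j:ℕ)+1 < p) :
    Tmat hq hp A i j
      = (A ⟨(i:ℕ)+1, hi⟩ ⟨(j:ℕ)+1, hj⟩ * A ⟨0, hq⟩ ⟨0, hp⟩ -
          A ⟨0, hq⟩ ⟨(j:ℕ)+1, hj⟩ * A ⟨(i:ℕ)+1, hi⟩ ⟨0, hp⟩) / A ⟨0, hq⟩ ⟨0, hp⟩ := by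
  unfold Tmat
  rw [dif_pos hi, dif_pos hj]

lemma Tmat_hl (hq : 0 < q) (hp : 0 < p) (A : Matrix (Fin q) (Fin p) F)
    (i : Fin q) (j : Fin p) (hi : (i:ℕ)+1 < q) (hj : ¬ ((j:ℕ)+1 < p)) :
    Tmat hq hp A i j = A ⟨(i:ℕ)+1, hi⟩ ⟨0, hp⟩ / A ⟨0, hq⟩ ⟨0, hp⟩ := by
  unfold Tmat
  rw [dif_pos hi, dif_neg hj]

lemma Tmat_lh (hq : 0 < q) (hp : 0 < p) (A : Matrix (Fin q) (Fin p) F)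
    (i : Fin q) (j : Fin p) (hi : ¬ ((i:ℕ)+1 < q)) (hj : (j:ℕ)+1 < p) :
    Tmat hq hp A i j = -A ⟨0, hq⟩ ⟨(j:ℕ)+1, hj⟩ / A ⟨0, hq⟩ ⟨0, hp⟩ := by
  unfold Tmat
  rw [dif_neg hi, dif_pos hj]

lemma Tmat_ll (hq : 0 < q) (hp : 0 < p) (A : Matrix (Fin q) (Fin p) F)
    (i : Fin q) (j : Fin p) (hi : ¬ ((i:ℕ)+1 < q)) (hj : ¬ ((j:ℕ)+1 < p)) :
    Tmat hq hp A i j = 1 / A ⟨0, hq⟩ ⟨0, hp⟩ := by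
  unfold Tmat
  rw [dif_neg hi, dif_neg hj]

lemma Tinv_Tmat (hq : 0 < q) (hp : 0 < p) (A : Matrix (Fin q) (Fin p) F)
    (hA : A ⟨0, hq⟩ ⟨0, hp⟩ ≠ 0) :
    Tinv hq hp (Tmat hq hp A) = A := by
  funext i j
  have hq1 : ¬ ((q - 1) + 1 < q) := by omega
  have hp1 : ¬ ((p - 1) + 1 < p) := by omega
  have hcorner : Tmat hq hp A ⟨q - 1, Nat.sub_lt hq one_pos⟩ ⟨p - 1, Nat.sub_lt hp one_pos⟩
      = 1 / A ⟨0, hq⟩ ⟨0, hp⟩ := Tmat_ll hq hp A _ _ hq1 hp1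
  unfold Tinv
  by_cases hi : (i:ℕ) = 0 <;> by_cases hj : (j:ℕ) = 0
  · rw [dif_pos hi, dif_pos hj, hcorner, one_div_one_div,
      show i = ⟨0, hq⟩ from Fin.ext hi, show j = ⟨0, hp⟩ from Fin.ext hj]
  · rw [dif_pos hi, dif_neg hj, hcorner]
    have hjlt : ((⟨(j:ℕ) - 1, by have := j.isLt; omega⟩ : Fin p) : ℕ) + 1 < p :=
      show (j:ℕ) - 1 + 1 < p by have := j.isLt; omega
    rw [Tmat_lh hq hp A _ _ hq1 hjlt]
    have hJ : (⟨((⟨(j:ℕ) - 1, by have := j.isLt; omega⟩ : Fin p) : ℕ) + 1, hjlt⟩ : Fin p) = j :=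
      Fin.ext (show (j:ℕ) - 1 + 1 = (j:ℕ) by omega)
    rw [hJ, show i = ⟨0, hq⟩ from Fin.ext hi]
    field_simp
  · rw [dif_neg hi, dif_pos hj, hcorner]
    have hilt : ((⟨(i:ℕ) - 1, by have := i.isLt; omega⟩ : Fin q) : ℕ) + 1 < q :=
      show (i:ℕ) - 1 + 1 < q by have := i.isLt; omega
    rw [Tmat_hl hq hp A _ _ hilt hp1]
    have hI : (⟨((⟨(i:ℕ) - 1, by have := i.isLt; omega⟩ : Fin q) : ℕ) + 1, hilt⟩ : Fin q) = i :=
      Fin.ext (show (i:ℕ) - 1 + 1 = (i:ℕ) by omega)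
    rw [hI, show j = ⟨0, hp⟩ from Fin.ext hj]
    field_simp
  · rw [dif_neg hi, dif_neg hj, hcorner]
    have hilt : ((⟨(i:ℕ) - 1, by have := i.isLt; omega⟩ : Fin q) : ℕ) + 1 < q :=
      show (i:ℕ) - 1 + 1 < q by have := i.isLt; omega
    have hjlt : ((⟨(j:ℕ) - 1, by have := j.isLt; omega⟩ : Fin p) : ℕ) + 1 < p :=
      show (j:ℕ) - 1 + 1 < p by have := j.isLt; omega
    rw [Tmat_hh hq hp A _ _ hilt hjlt, Tmat_hl hq hp A _ _ hilt hp1,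
      Tmat_lh hq hp A _ _ hq1 hjlt]
    have hI : (⟨((⟨(i:ℕ) - 1, by have := i.isLt; omega⟩ : Fin q) : ℕ) + 1, hilt⟩ : Fin q) = i :=
      Fin.ext (show (i:ℕ) - 1 + 1 = (i:ℕ) by omega)
    have hJ : (⟨((⟨(j:ℕ) - 1, by have := j.isLt; omega⟩ : Fin p) : ℕ) + 1, hjlt⟩ : Fin p) = j :=
      Fin.ext (show (j:ℕ) - 1 + 1 = (j:ℕ) by omega)
    rw [hI, hJ]
    field_simp
    ring

end MatrixLemmas
section KeyStep
variable (p q : ℕ) (a : ℤ → ℤ → ℂ)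

lemma Ek00 (k : ℕ) : Ek p q a k 0 0 = a 0 (-((k:ℤ)+1)) := by
  simp only [Ek, Emat]
  rw [if_pos ⟨by omega, by omega⟩]
  congr 1
  · omega
  · have h : max (0+k) (0+k) = k := by omega
    rw [h]
    ring

lemma EkRow (k i' : ℕ) (h : i' + 1 ≤ q) :
    Ek p q a k 0 (i'+1) = a (((i':ℕ):ℤ)+1) (-((k:ℤ)+((i':ℕ):ℤ)+2)) := by
  simp only [Ek, Emat]
  rw [if_pos ⟨by push_cast; omega, by push_cast; omega⟩]
  congr 1
  · push_cast; omega
  · have hm : max (0+k) (i'+1+k) = i'+1+k := by omega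
    rw [hm]
    push_cast; ring

lemma EkCol (k j' : ℕ) (h : j' + 1 ≤ p) :
    Ek p q a k (j'+1) 0 = a (-(((j':ℕ):ℤ)+1)) (-((k:ℤ)+((j':ℕ):ℤ)+2)) := by
  simp only [Ek, Emat]
  rw [if_pos ⟨by push_cast; omega, by push_cast; omega⟩]
  congr 1
  · push_cast; omega
  · have hm : max (j'+1+k) (0+k) = j'+1+k := by omega
    rw [hm]
    push_cast; ring

lemma rowHit_fin (hp : 0 < p) (k i : ℕ) :
    rowHit p q a k i
      = ∑ j' : Fin p, GserE p q a (k+1) i (j':ℕ)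
          * CLS (a (-(((j':ℕ):ℤ)+1)) (-((k:ℤ)+((j':ℕ):ℤ)+2))) := by
  rw [rowHit, ← Fin.sum_univ_eq_sum_range]
  exact Finset.sum_congr rfl fun j' _ => by
    rw [EkCol p q a k (j':ℕ) j'.isLt]

lemma colHit_fin (hq : 0 < q) (k j : ℕ) :
    colHit p q a k j
      = ∑ i' : Fin q, GserE p q a (k+1) (i':ℕ) j
          * CLS (a (((i':ℕ):ℤ)+1) (-((k:ℤ)+((i':ℕ):ℤ)+2))) := by
  rw [colHit, ← Fin.sum_univ_eq_sum_range]
  exact Finset.sum_congr rfl fun i' _ => by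
    rw [EkRow p q a k (i':ℕ) i'.isLt]

lemma mulP (k : ℕ) (X : Matrix (Fin q) (Fin p) LS) (i : Fin q) (j : Fin p) :
    (nuP q a k * X) i j
      = if (i:ℕ) = q - 1
        then ∑ i' : Fin q,
          -CLS (a (((i':ℕ):ℤ)+1) (-((k:ℤ)+((i':ℕ):ℤ)+2))) * X i' j
        else X i j := by
  rw [Matrix.mul_apply]
  by_cases h : (i:ℕ) = q - 1
  · rw [if_pos h]
    refine Finset.sum_congr rfl fun x _ => ?_
    rw [show nuP q a k i x = -CLS (a (((x:ℕ):ℤ)+1) (-((k:ℤ)+((x:ℕ):ℤ)+2))) from by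
      unfold nuP; rw [if_pos h]]
  · rw [if_neg h]
    rw [Finset.sum_eq_single i]
    · rw [show nuP q a k i i = 1 from by unfold nuP; rw [if_neg h, if_pos rfl], one_mul]
    · intro b _ hb
      rw [show nuP q a k i b = 0 from by unfold nuP; rw [if_neg h, if_neg (Ne.symm hb)],
        zero_mul]
    · intro hmem; exact absurd (Finset.mem_univ i) hmem

lemma mulM (k : ℕ) (Y : Matrix (Fin q) (Fin p) LS) (i : Fin q) (j : Fin p) :
    (Y * nuM p a k) i j
      = if (j:ℕ) = p - 1
        then ∑ j' : Fin p,
          Y i j' * CLS (a (-(((j':ℕ):ℤ)+1)) (-((k:ℤ)+((j':ℕ):ℤ)+2)))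
        else Y i j := by
  rw [Matrix.mul_apply]
  by_cases h : (j:ℕ) = p - 1
  · rw [if_pos h]
    refine Finset.sum_congr rfl fun x _ => ?_
    rw [show nuM p a k x j = CLS (a (-(((x:ℕ):ℤ)+1)) (-((k:ℤ)+((x:ℕ):ℤ)+2))) from by
      unfold nuM; rw [if_pos h]]
  · rw [if_neg h]
    rw [Finset.sum_eq_single j]
    · rw [show nuM p a k j j = 1 from by unfold nuM; rw [if_neg h, if_pos rfl], mul_one]
    · intro b _ hb
      rw [show nuM p a k b j = 0 from by unfold nuM; rw [if_neg h, if_neg hb], mul_zero]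
    · intro hmem; exact absurd (Finset.mem_univ j) hmem

lemma key1 (hp : 0 < p) (hq : 0 < q) (k : ℕ) :
    Tmat hq hp (Vmatr p q a k)
      = nuZ p q a k + nuP q a k * Vmatr p q a (k+1) * nuM p a k := by
  funext i j
  rw [Matrix.add_apply, mulM]
  have hne := GserE_ne p q a k
  have e2 : Vmatr p q a k ⟨0, hq⟩ ⟨0, hp⟩ = GserE p q a k 0 0 := rfl
  by_cases hi : (i:ℕ)+1 < q <;> by_cases hj : (j:ℕ)+1 < p
  · -- interior
    rw [Tmat_hh hq hp _ i j hi hj]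
    have hiq : ¬ ((i:ℕ) = q - 1) := by omega
    have hjp : ¬ ((j:ℕ) = p - 1) := by omega
    rw [if_neg hjp, mulP, if_neg hiq,
      show nuZ p q a k i j = 0 from by unfold nuZ; rw [if_neg (by omega)], zero_add]
    have e1 : Vmatr p q a k ⟨(i:ℕ)+1, hi⟩ ⟨(j:ℕ)+1, hj⟩
        = GserE p q a k ((i:ℕ)+1) ((j:ℕ)+1) := rfl
    have e3 : Vmatr p q a k ⟨0, hq⟩ ⟨(j:ℕ)+1, hj⟩ = GserE p q a k 0 ((j:ℕ)+1) := rfl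
    have e4 : Vmatr p q a k ⟨(i:ℕ)+1, hi⟩ ⟨0, hp⟩ = GserE p q a k ((i:ℕ)+1) 0 := rfl
    have e5 : Vmatr p q a (k+1) i j = GserE p q a (k+1) (i:ℕ) (j:ℕ) := rfl
    rw [e1, e2, e3, e4, e5, SA1, SB, SA0, div_eq_iff hne]
    ring
  · -- last column
    rw [Tmat_hl hq hp _ i j hi hj]
    have hiq : ¬ ((i:ℕ) = q - 1) := by omega
    have hjp : (j:ℕ) = p - 1 := by have := j.isLt; omega
    rw [if_pos hjp,
      show nuZ p q a k i j = 0 from by unfold nuZ; rw [if_neg (by omega)], zero_add]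
    have hterm : ∀ j' : Fin p, j' ∈ (Finset.univ : Finset (Fin p)) →
        (nuP q a k * Vmatr p q a (k+1)) i j'
            * CLS (a (-(((j':ℕ):ℤ)+1)) (-((k:ℤ)+((j':ℕ):ℤ)+2)))
          = GserE p q a (k+1) (i:ℕ) ((j':ℕ))
            * CLS (a (-(((j':ℕ):ℤ)+1)) (-((k:ℤ)+((j':ℕ):ℤ)+2))) := by
      intro j' _
      rw [mulP, if_neg hiq]
      rfl
    rw [Finset.sum_congr rfl hterm]
    have e4 : Vmatr p q a k ⟨(i:ℕ)+1, hi⟩ ⟨0, hp⟩ = GserE p q a k ((i:ℕ)+1) 0 := rfl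
    rw [e4, e2, SA0, mul_div_assoc, div_self hne, mul_one, rowHit_fin p q a hp]
  · -- last row
    rw [Tmat_lh hq hp _ i j hi hj]
    have hiq : (i:ℕ) = q - 1 := by have := i.isLt; omega
    have hjp : ¬ ((j:ℕ) = p - 1) := by omega
    rw [if_neg hjp, mulP, if_pos hiq,
      show nuZ p q a k i j = 0 from by unfold nuZ; rw [if_neg (by omega)], zero_add]
    have e3 : Vmatr p q a k ⟨0, hq⟩ ⟨(j:ℕ)+1, hj⟩ = GserE p q a k 0 ((j:ℕ)+1) := rfl
    rw [e3, e2, SB]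
    have hS : ∑ i' : Fin q,
        -CLS (a (((i':ℕ):ℤ)+1) (-((k:ℤ)+((i':ℕ):ℤ)+2))) * Vmatr p q a (k+1) i' j
          = -colHit p q a k (j:ℕ) := by
      rw [colHit_fin p q a hq, ← Finset.sum_neg_distrib]
      refine Finset.sum_congr rfl fun i' _ => ?_
      have e5 : Vmatr p q a (k+1) i' j = GserE p q a (k+1) (i':ℕ) (j:ℕ) := rfl
      rw [e5]
      ring
    rw [hS]
    field_simp
  · -- corner
    rw [Tmat_ll hq hp _ i j hi hj]
    have hiq : (i:ℕ) = q - 1 := by have := i.isLt; omega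
    have hjp : (j:ℕ) = p - 1 := by have := j.isLt; omega
    rw [if_pos hjp,
      show nuZ p q a k i j = zLS - CLS (a 0 (-((k:ℤ)+1))) from by
        unfold nuZ; rw [if_pos ⟨hiq, hjp⟩]]
    have hterm : ∀ j' : Fin p, j' ∈ (Finset.univ : Finset (Fin p)) →
        (nuP q a k * Vmatr p q a (k+1)) i j'
            * CLS (a (-(((j':ℕ):ℤ)+1)) (-((k:ℤ)+((j':ℕ):ℤ)+2)))
          = (∑ i' : Fin q,
              -CLS (a (((i':ℕ):ℤ)+1) (-((k:ℤ)+((i':ℕ):ℤ)+2)))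
                * Vmatr p q a (k+1) i' j')
            * CLS (a (-(((j':ℕ):ℤ)+1)) (-((k:ℤ)+((j':ℕ):ℤ)+2))) := by
      intro j' _
      rw [mulP, if_pos hiq]
    rw [Finset.sum_congr rfl hterm, e2]
    have hsum : ∑ j' : Fin p,
        (∑ i' : Fin q,
          -CLS (a (((i':ℕ):ℤ)+1) (-((k:ℤ)+((i':ℕ):ℤ)+2))) * Vmatr p q a (k+1) i' j')
          * CLS (a (-(((j':ℕ):ℤ)+1)) (-((k:ℤ)+((j':ℕ):ℤ)+2)))
        = -∑ i' ∈ Finset.range q, CLS (Ek p q a k 0 (i'+1)) * rowHit p q a k i' := by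
      rw [← Fin.sum_univ_eq_sum_range
        (fun i' => CLS (Ek p q a k 0 (i'+1)) * rowHit p q a k i') q]
      rw [← Finset.sum_neg_distrib]
      have step1 : ∀ j' ∈ (Finset.univ : Finset (Fin p)),
          (∑ i' : Fin q,
            -CLS (a (((i':ℕ):ℤ)+1) (-((k:ℤ)+((i':ℕ):ℤ)+2))) * Vmatr p q a (k+1) i' j')
            * CLS (a (-(((j':ℕ):ℤ)+1)) (-((k:ℤ)+((j':ℕ):ℤ)+2)))
          = ∑ i' : Fin q,
              -CLS (a (((i':ℕ):ℤ)+1) (-((k:ℤ)+((i':ℕ):ℤ)+2))) * Vmatr p q a (k+1) i' j'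
                * CLS (a (-(((j':ℕ):ℤ)+1)) (-((k:ℤ)+((j':ℕ):ℤ)+2))) :=
        fun j' _ => Finset.sum_mul _ _ _
      rw [Finset.sum_congr rfl step1, Finset.sum_comm]
      refine Finset.sum_congr rfl fun i' _ => ?_
      rw [EkRow p q a k (i':ℕ) i'.isLt, rowHit_fin p q a hp, Finset.mul_sum,
        ← Finset.sum_neg_distrib]
      refine Finset.sum_congr rfl fun j' _ => ?_
      have e5 : Vmatr p q a (k+1) i' j' = GserE p q a (k+1) (i':ℕ) (j':ℕ) := rfl
      rw [e5]
      ring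
    rw [hsum]
    have hSC := SC p q a k
    rw [Ek00] at hSC
    have h1 : GserE p q a k 0 0
        * (zLS - CLS (a 0 (-((k:ℤ)+1)))
            + -∑ i' ∈ Finset.range q, CLS (Ek p q a k 0 (i'+1)) * rowHit p q a k i') = 1 := by
      calc GserE p q a k 0 0
          * (zLS - CLS (a 0 (-((k:ℤ)+1)))
            + -∑ i' ∈ Finset.range q, CLS (Ek p q a k 0 (i'+1)) * rowHit p q a k i')
          = zLS * GserE p q a k 0 0
            - (CLS (a 0 (-((k:ℤ)+1)))
              + ∑ i' ∈ Finset.range q, CLS (Ek p q a k 0 (i'+1)) * rowHit p q a k i')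
              * GserE p q a k 0 0 := by ring
        _ = 1 := by rw [hSC]; ring
    exact (eq_one_div_of_mul_eq_one_left ((mul_comm _ _).trans h1)).symm

lemma keystep (hp : 0 < p) (hq : 0 < q) (k : ℕ) :
    tauNu p q hq hp a k (Vmatr p q a (k+1)) = Vmatr p q a k := by
  unfold tauNu
  rw [← key1 p q a hp hq k]
  exact Tinv_Tmat hq hp _ (GserE_ne p q a k)

lemma corner_ne (hp : 0 < p) (hq : 0 < q) (k : ℕ) :
    (nuZ p q a k + nuP q a k * Vmatr p q a (k+1) * nuM p a k)
      ⟨q - 1, Nat.sub_lt hq one_pos⟩ ⟨p - 1, Nat.sub_lt hp one_pos⟩ ≠ 0 := by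
  rw [← key1 p q a hp hq k,
    Tmat_ll hq hp _ _ _ (show ¬((q-1)+1 < q) by omega) (show ¬((p-1)+1 < p) by omega)]
  exact one_div_ne_zero (GserE_ne p q a k)

end KeyStep
section PartOne
variable (p q : ℕ) (a : ℤ → ℤ → ℂ)

lemma hgt_zero (i : ℤ) (σ : ℕ → ℤ) : hgt i σ 0 = i := by simp [hgt]

lemma mem_steps {n : ℕ} (s : Fin n → ℤ) :
    s ∈ steps p q n ↔ ∀ t, s t ∈ Finset.Icc (-(p:ℤ)) (q:ℤ) := Fintype.mem_piFinset

lemma Vpoly_zero_of_nonneg (n : ℕ) (i j : ℤ) (hj : 0 ≤ j) :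
    Vpoly p q a n i j = 0 := by
  refine Finset.sum_eq_zero fun s _ => ?_
  rw [if_neg]
  rintro ⟨h1, h2⟩
  have := h2 n le_rfl
  omega

lemma Vpoly_len0 (i j : ℤ) (hj : j ≤ -1) :
    Vpoly p q a 0 i j = if i = j then 1 else 0 := by
  unfold Vpoly
  have hconst : ∀ s ∈ steps p q 0,
      (if hgt i (_root_.ext s) 0 = j ∧ ∀ k : ℕ, k ≤ 0 → hgt i (_root_.ext s) k ≤ -1
        then wgt a 0 i (_root_.ext s) else 0)
      = if i = j then (1:ℂ) else 0 := by
    intro s _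
    have h0 : hgt i (_root_.ext s) 0 = i := hgt_zero i _
    have hw : wgt a 0 i (_root_.ext s) = 1 := by simp [wgt]
    by_cases h : i = j
    · rw [if_pos h, hw, if_pos]
      refine ⟨by rw [h0, h], fun k hk => ?_⟩
      interval_cases k
      rw [h0]; omega
    · rw [if_neg h, if_neg]
      rintro ⟨h1, _⟩
      rw [h0] at h1
      exact h h1
  rw [Finset.sum_congr rfl hconst, Finset.sum_const]
  have hcard : (steps p q 0).card = 1 := by
    simp [steps, Fintype.card_piFinset]
  rw [hcard, one_smul]

lemma ext_snoc_lt {n : ℕ} (s' : Fin n → ℤ) (d : ℤ) (t : ℕ) (ht : t < n) :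
    _root_.ext (Fin.snoc s' d) t = _root_.ext s' t := by
  unfold _root_.ext
  rw [dif_pos (by omega : t < n + 1), dif_pos ht]
  have h : (⟨t, by omega⟩ : Fin (n+1)) = Fin.castSucc ⟨t, ht⟩ := rfl
  rw [h, Fin.snoc_castSucc]

lemma ext_snoc_last {n : ℕ} (s' : Fin n → ℤ) (d : ℤ) :
    _root_.ext (Fin.snoc s' d) n = d := by
  unfold _root_.ext
  rw [dif_pos (by omega : n < n + 1)]
  have h : (⟨n, by omega⟩ : Fin (n+1)) = Fin.last n := rfl
  rw [h, Fin.snoc_last]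

lemma hgt_snoc {n : ℕ} (i : ℤ) (s' : Fin n → ℤ) (d : ℤ) (k : ℕ) (hk : k ≤ n) :
    hgt i (_root_.ext (Fin.snoc s' d)) k = hgt i (_root_.ext s') k := by
  unfold hgt
  congr 1
  refine Finset.sum_congr rfl fun t ht => ?_
  have := Finset.mem_range.mp ht
  exact ext_snoc_lt s' d t (by omega)

lemma Vpoly_succ (n : ℕ) (i j : ℤ) (hj : j ≤ -1) :
    Vpoly p q a (n+1) i j
      = ∑ d ∈ Finset.Icc (-(p:ℤ)) (q:ℤ), stepW a (j - d) d * Vpoly p q a n i (j - d) := by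
  unfold Vpoly
  have hbij : ∑ s ∈ steps p q (n+1),
      (if hgt i (_root_.ext s) (n+1) = j ∧ ∀ k ≤ n+1, hgt i (_root_.ext s) k ≤ -1
        then wgt a (n+1) i (_root_.ext s) else 0)
      = ∑ x ∈ (steps p q n) ×ˢ (Finset.Icc (-(p:ℤ)) (q:ℤ)),
          (if hgt i (_root_.ext (Fin.snoc x.1 x.2)) (n+1) = j
              ∧ ∀ k ≤ n+1, hgt i (_root_.ext (Fin.snoc x.1 x.2)) k ≤ -1
            then wgt a (n+1) i (_root_.ext (Fin.snoc x.1 x.2)) else 0) := by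
    refine Finset.sum_nbij' (fun s => ((Fin.init s, s (Fin.last n)) : (Fin n → ℤ) × ℤ))
      (fun x => Fin.snoc x.1 x.2) ?_ ?_ ?_ ?_ ?_
    · intro s hs
      rw [mem_steps] at hs
      rw [Finset.mem_product]
      exact ⟨(mem_steps p q _).mpr fun t => hs _, hs _⟩
    · intro x hx
      rw [Finset.mem_product] at hx
      rw [mem_steps]
      intro t
      refine Fin.lastCases ?_ ?_ t
      · simpa only [Fin.snoc_last] using hx.2
      · intro t'
        simpa only [Fin.snoc_castSucc] using (mem_steps p q _).mp hx.1 t'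
    · intro s _
      exact Fin.snoc_init_self s
    · intro x _
      simp [Fin.init_snoc, Fin.snoc_last]
    · intro s _
      rw [Fin.snoc_init_self]
  rw [hbij, Finset.sum_product_right]
  refine Finset.sum_congr rfl fun d hd => ?_
  rw [Finset.mul_sum]
  refine Finset.sum_congr rfl fun s' hs' => ?_
  have hlast : _root_.ext (Fin.snoc s' d) n = d := ext_snoc_last s' d
  have hgn : ∀ k : ℕ, k ≤ n →
      hgt i (_root_.ext (Fin.snoc s' d)) k = hgt i (_root_.ext s') k := hgt_snoc i s' d
  have hgn1 : hgt i (_root_.ext (Fin.snoc s' d)) (n+1) = hgt i (_root_.ext s') n + d := by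
    unfold hgt
    rw [Finset.sum_range_succ, hlast]
    have h2 : ∑ t ∈ Finset.range n, _root_.ext (Fin.snoc s' d) t
        = ∑ t ∈ Finset.range n, _root_.ext s' t :=
      Finset.sum_congr rfl fun t ht => ext_snoc_lt s' d t (Finset.mem_range.mp ht)
    rw [h2]
    ring
  have hwg : wgt a (n+1) i (_root_.ext (Fin.snoc s' d))
      = wgt a n i (_root_.ext s') * stepW a (hgt i (_root_.ext s') n) d := by
    unfold wgt
    rw [Finset.prod_range_succ, hlast, hgn n le_rfl]
    congr 1
    refine Finset.prod_congr rfl fun t ht => ?_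
    have htn := Finset.mem_range.mp ht
    rw [hgn t (by omega), ext_snoc_lt s' d t htn]
  by_cases hC : hgt i (_root_.ext s') n = j - d
      ∧ ∀ k : ℕ, k ≤ n → hgt i (_root_.ext s') k ≤ -1
  · rw [if_pos, if_pos hC, hwg, hC.1]
    · ring
    · refine ⟨by rw [hgn1, hC.1]; ring, fun k hk => ?_⟩
      rcases Nat.lt_or_ge k (n+1) with h | h
      · rw [hgn k (by omega)]
        exact hC.2 k (by omega)
      · have hkn : k = n + 1 := by omega
        subst hkn
        rw [hgn1, hC.1]
        omega
  · rw [if_neg, if_neg hC, mul_zero]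
    rintro ⟨h1, h2⟩
    refine hC ⟨?_, fun k hk => ?_⟩
    · have h3 := hgn1
      rw [h1] at h3
      omega
    · rw [← hgn k hk]
      exact h2 k (by omega)

lemma stepE (i r : ℕ) (d : ℤ) (hr : (i:ℤ) + d = (r:ℕ)) (h1 : -(p:ℤ) ≤ d) (h2 : d ≤ (q:ℤ)) :
    stepW a (-((i:ℤ)+1) - d) d = Emat p q a i r := by
  unfold stepW Emat
  rw [if_pos (⟨by omega, by omega⟩ : -(p:ℤ) ≤ (r:ℤ) - (i:ℤ) ∧ (r:ℤ) - (i:ℤ) ≤ (q:ℤ))]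
  by_cases h0 : 0 ≤ d
  · rw [if_pos h0]
    have hm : max i r = r := by omega
    rw [hm]
    congr 1 <;> omega
  · rw [if_neg h0]
    have hm : max i r = i := by omega
    rw [hm]
    congr 1 <;> omega

lemma part1 : ∀ (n i j : ℕ),
    Vpoly p q a n (-((j:ℤ)+1)) (-((i:ℤ)+1)) = onePow (Emat p q a) q n i j := by
  intro n
  induction n with
  | zero =>
    intro i j
    rw [Vpoly_len0 p q a _ _ (by omega)]
    simp only [onePow]
    by_cases h : i = j
    · rw [if_pos (by omega : -((j:ℤ)+1) = -((i:ℤ)+1)), if_pos h]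
    · rw [if_neg (by omega : ¬ (-((j:ℤ)+1) = -((i:ℤ)+1))), if_neg h]
  | succ n ih =>
    intro i j
    rw [Vpoly_succ p q a n _ _ (by omega), onePow_succ]
    have hLsub : ∑ d ∈ Finset.Icc (-(p:ℤ)) (q:ℤ),
        stepW a (-((i:ℤ)+1) - d) d * Vpoly p q a n (-((j:ℤ)+1)) (-((i:ℤ)+1) - d)
        = ∑ d ∈ (Finset.Icc (-(p:ℤ)) (q:ℤ)).filter (fun d => 0 ≤ (i:ℤ) + d),
            stepW a (-((i:ℤ)+1) - d) d * Vpoly p q a n (-((j:ℤ)+1)) (-((i:ℤ)+1) - d) := by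
      rw [Finset.sum_filter_of_ne]
      intro d _ hne
      by_contra hneg
      push_neg at hneg
      exact hne (by
        rw [Vpoly_zero_of_nonneg p q a n _ _ (by omega), mul_zero])
    have hRsub : ∑ r ∈ Finset.range (i + q + 1),
        Emat p q a i r * onePow (Emat p q a) q n r j
        = ∑ r ∈ (Finset.range (i + q + 1)).filter (fun r : ℕ => (i:ℤ) ≤ (r:ℤ) + (p:ℤ)),
            Emat p q a i r * onePow (Emat p q a) q n r j := by
      rw [Finset.sum_filter_of_ne]
      intro r _ hne
      by_contra hneg
      push_neg at hneg
      refine hne ?_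
      have hz : Emat p q a i r = 0 := by
        unfold Emat
        rw [if_neg]
        rintro ⟨hb, _⟩
        omega
      rw [hz, zero_mul]
    rw [hLsub, hRsub]
    refine Finset.sum_nbij' (fun d : ℤ => ((i:ℤ) + d).toNat)
      (fun r : ℕ => (r:ℤ) - (i:ℤ)) ?_ ?_ ?_ ?_ ?_
    · intro d hd
      simp only [Finset.mem_filter, Finset.mem_Icc, Finset.mem_range] at hd ⊢
      omega
    · intro r hr
      simp only [Finset.mem_filter, Finset.mem_Icc, Finset.mem_range] at hr ⊢
      omega
    · intro d hd
      simp only [Finset.mem_filter, Finset.mem_Icc] at hd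
      show (((i:ℤ) + d).toNat : ℤ) - (i:ℤ) = d
      omega
    · intro r hr
      simp only [Finset.mem_filter, Finset.mem_range] at hr
      show ((i:ℤ) + ((r:ℤ) - (i:ℤ))).toNat = r
      omega
    · intro d hd
      simp only [Finset.mem_filter, Finset.mem_Icc] at hd
      set r : ℕ := ((i:ℤ) + d).toNat with hrdef
      have hr : (i:ℤ) + d = (r:ℕ) := by omega
      rw [stepE p q a i r d hr (by omega) (by omega)]
      have harg : -((i:ℤ)+1) - d = -((r:ℤ)+1) := by omega
      rw [harg, ih r j]

lemma part1' : VmatV p q a = Vmatr p q a 0 := by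
  funext i j
  show gen (fun n => Vpoly p q a n (-(((j:ℕ):ℤ)+1)) (-(((i:ℕ):ℤ)+1))) = _
  refine congrArg gen (funext fun n => ?_)
  rw [part1 p q a n (i:ℕ) (j:ℕ)]
  rfl

end PartOne
section Chain
variable (p q : ℕ) (a : ℤ → ℤ → ℂ)

lemma chainFrom_self {M : Type*} (τ : ℕ → M → M) (k : ℕ) (X : M) :
    chainFrom τ k X k = X := by
  unfold chainFrom
  rw [Nat.sub_self]
  rfl

lemma chainFrom_step {M : Type*} (τ : ℕ → M → M) (k : ℕ) (X : M) (m : ℕ) (h : m < k) :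
    chainFrom τ k X m = τ m (chainFrom τ k X (m+1)) := by
  unfold chainFrom
  rw [show k - m = (k - (m+1)) + 1 by omega, List.range_succ_eq_map, List.foldr_cons,
    List.foldr_map]
  rw [show m + 0 = m by omega]
  have hf : (fun (x : ℕ) (y : M) => τ (m + x.succ) y)
      = fun (t : ℕ) (Y : M) => τ (m + 1 + t) Y := by
    funext x y
    rw [show m + x.succ = m + 1 + x by omega]
  rw [hf]

lemma chain_eq (hp : 0 < p) (hq : 0 < q) :
    ∀ (d k m : ℕ), m + d = k →
      chainFrom (tauNu p q hq hp a) k (Vmatr p q a k) m = Vmatr p q a m := by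
  intro d
  induction d with
  | zero =>
    intro k m h
    have hmk : m = k := by omega
    subst hmk
    exact chainFrom_self _ _ _
  | succ d ih =>
    intro k m h
    rw [chainFrom_step _ _ _ _ (by omega), ih k (m+1) (by omega),
      keystep p q a hp hq m]

end Chain

/-- **Proposition 6.4** (matrix continued fraction for `V(z)`): `V(z) = V_0(z)`, and for every
`k ≥ 1` all transformations are defined and `V(z) = (τ_{ν,0} ∘ ⋯ ∘ τ_{ν,k-1})(V_k(z))`. -/
theorem matrix_continued_fraction_for_V
    (p q : ℕ) (hp : 0 < p) (hq : 0 < q) (a : ℤ → ℤ → ℂ) :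
    VmatV p q a = Vmatr p q a 0 ∧
    ∀ k : ℕ, 1 ≤ k →
      (∀ m < k,
        (nuZ p q a m +
            nuP q a m * chainFrom (tauNu p q hq hp a) k (Vmatr p q a k) (m + 1) * nuM p a m)
            ⟨q - 1, Nat.sub_lt hq one_pos⟩ ⟨p - 1, Nat.sub_lt hp one_pos⟩ ≠ 0) ∧
      VmatV p q a = chainFrom (tauNu p q hq hp a) k (Vmatr p q a k) 0 := by
  refine ⟨part1' p q a, fun k hk => ⟨fun m hm => ?_, ?_⟩⟩
  · rw [chain_eq p q a hp hq (k - (m+1)) k (m+1) (by omega)]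
    exact corner_ne p q a hp hq m
  · rw [chain_eq p q a hp hq k k 0 (by omega)]
    exact part1' p q a
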